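/- For each k ≥ 1, the number H_n of solus binary strings of length n with no run of k consecutive 0s satisfies the generating function identity ∑_{n≥0} H_n z^n = (1 + z - z^k - z^{k+1})/(1 - z - z^2 + z^{k+1}) as formal power series. -/

import Mathlib

def Solus {n : ℕ} (f : Fin n → Bool) : Prop :=
  ∀ i : ℕ, ∀ h : i + 1 < n, ¬(f ⟨i, by omega⟩ = true ∧ f ⟨i + 1, h⟩ = true)

def HasRun {n : ℕ} (b : Bool) (k : ℕ) (f : Fin n → Bool) : Prop :=
  ∃ s : ℕ, ∃ _ : s + k ≤ n, ∀ t : ℕ, ∀ _ : t < k, f ⟨s + t, by omega⟩ = b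

/-- first `m` entries are false -/
def LeadF (m : ℕ) {n : ℕ} (f : Fin n → Bool) : Prop :=
  ∃ _ : m ≤ n, ∀ t : ℕ, ∀ ht : t < m, f ⟨t, by omega⟩ = false

lemma leadF_zero {n : ℕ} (f : Fin n → Bool) : LeadF 0 f := ⟨Nat.zero_le _, by omega⟩

lemma leadF_mono {m m' n : ℕ} {f : Fin n → Bool} (h : m' ≤ m) (hl : LeadF m f) : LeadF m' f := by
  obtain ⟨h1, h2⟩ := hl
  exact ⟨by omega, fun t ht => h2 t (by omega)⟩

lemma fin_congr {n : ℕ} (f : Fin n → Bool) {a b : ℕ} {ha : a < n} {hb : b < n} (h : a = b) :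
    f ⟨a, ha⟩ = f ⟨b, hb⟩ := by subst h; rfl

lemma cons_at {n : ℕ} (b : Bool) (f : Fin n → Bool) {j j' : ℕ} {h : j < n + 1}
    (hj : j = j' + 1) (h' : j' < n) :
    (Fin.cons b f : Fin (n+1) → Bool) ⟨j, h⟩ = f ⟨j', h'⟩ := by
  subst hj; exact Fin.cons_succ (α := fun _ => Bool) b f ⟨j', h'⟩

lemma cons_at0 {n : ℕ} (b : Bool) (f : Fin n → Bool) {j : ℕ} {h : j < n + 1} (hj : j = 0) :
    (Fin.cons b f : Fin (n+1) → Bool) ⟨j, h⟩ = b := by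
  subst hj; exact Fin.cons_zero (α := fun _ => Bool) b f

lemma leadF_cons {m n : ℕ} (b : Bool) (f : Fin n → Bool) :
    LeadF (m + 1) (Fin.cons b f) ↔ b = false ∧ LeadF m f := by
  constructor
  · rintro ⟨h1, h2⟩
    refine ⟨?_, by omega, fun t ht => ?_⟩
    · have := h2 0 (by omega); rwa [cons_at0 b f rfl] at this
    · have := h2 (t+1) (by omega)
      rwa [cons_at b f rfl (by omega)] at this
  · rintro ⟨hb, h1, h2⟩
    refine ⟨by omega, fun t ht => ?_⟩
    match t with
    | 0 => rw [cons_at0 b f rfl]; exact hb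
    | t+1 => rw [cons_at b f rfl (by omega)]; exact h2 t (by omega)

lemma leadF_hasRun {k n : ℕ} {f : Fin n → Bool} (h : LeadF k f) : HasRun false k f := by
  obtain ⟨h1, h2⟩ := h
  exact ⟨0, by omega, fun t ht => by rw [fin_congr f (by omega : 0 + t = t)]; exact h2 t ht⟩

lemma solus_cons {n : ℕ} (b : Bool) (f : Fin n → Bool) :
    Solus (Fin.cons b f) ↔ Solus f ∧ (b = true → ∀ h : 0 < n, f ⟨0, h⟩ = false) := by
  constructor
  · intro hs
    constructor
    · intro i h hi
      have := hs (i+1) (by omega)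
      rw [cons_at b f rfl (by omega), cons_at b f rfl (by omega)] at this
      exact this hi
    · intro hb h
      have := hs 0 (by omega)
      rw [cons_at0 b f rfl, cons_at b f rfl (by omega)] at this
      rw [hb] at this
      by_contra hc
      exact this ⟨rfl, by revert hc; cases (f ⟨0, by omega⟩ : Bool) <;> simp⟩
  · rintro ⟨hs, hb⟩ i h hi
    match i with
    | 0 =>
      rw [cons_at0 b f rfl, cons_at b f rfl (by omega)] at hi
      have := hb hi.1 (by omega)
      have h2 := hi.2
      rw [fin_congr f (by omega : (0:ℕ)+1-1 = 0)] at h2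
      rw [this] at h2
      exact absurd h2 (by simp)
      omega
    | i+1 =>
      rw [cons_at b f rfl (by omega), cons_at b f rfl (by omega)] at hi
      exact hs i (by omega) ⟨hi.1, by rw [fin_congr f (by omega : i+1 = i+1+1-1)]; exact hi.2⟩

lemma hasRun_cons {k n : ℕ} (hk : 1 ≤ k) (b : Bool) (f : Fin n → Bool) :
    HasRun false k (Fin.cons b f) ↔ HasRun false k f ∨ (b = false ∧ LeadF (k-1) f) := by
  constructor
  · rintro ⟨s, hs, h⟩
    match s with
    | 0 =>
      right
      constructor
      · have := h 0 hk; rwa [cons_at0 b f (by omega)] at this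
      · refine ⟨by omega, fun t ht => ?_⟩
        have := h (t+1) (by omega)
        rwa [cons_at b f (by omega : 0 + (t+1) = t + 1) (by omega)] at this
    | s+1 =>
      left
      refine ⟨s, by omega, fun t ht => ?_⟩
      have := h t ht
      rwa [cons_at b f (by omega : s + 1 + t = (s + t) + 1) (by omega)] at this
  · rintro (⟨s, hs, h⟩ | ⟨hb, h1, h2⟩)
    · refine ⟨s+1, by omega, fun t ht => ?_⟩
      rw [cons_at b f (by omega : s + 1 + t = (s + t) + 1) (by omega)]
      exact h t ht
    · refine ⟨0, by omega, fun t ht => ?_⟩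
      match t with
      | 0 => rw [cons_at0 b f (by omega)]; exact hb
      | t+1 =>
        rw [cons_at b f (by omega : 0 + (t+1) = t + 1) (by omega)]
        exact h2 t (by omega)

/-- Bool-valued validity with state: `a` = may place a one now; `z` = may place at most `z` zeros now. -/
def vf (k : ℕ) : ∀ n : ℕ, (Fin n → Bool) → Bool → ℕ → Bool
  | 0, _, _, _ => true
  | n+1, f, a, z =>
    if f 0 = true then a && vf k n (Fin.tail f) false (k-1)
    else decide (0 < z) && vf k n (Fin.tail f) true (z-1)

/-- the corresponding counts -/
def vcount (k : ℕ) : ℕ → Bool → ℕ → ℕ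
  | 0, _, _ => 1
  | n+1, a, z => (if a then vcount k n false (k-1) else 0) + (if 0 < z then vcount k n true (z-1) else 0)

lemma vf_cons (k n : ℕ) (b : Bool) (f : Fin n → Bool) (a : Bool) (z : ℕ) :
    vf k (n+1) (Fin.cons b f) a z =
      if b = true then a && vf k n f false (k-1) else decide (0 < z) && vf k n f true (z-1) := by
  show (if (Fin.cons b f : Fin (n+1) → Bool) 0 = true then _ else _) = _
  rw [Fin.cons_zero (α := fun _ => Bool), Fin.tail_cons (α := fun _ => Bool)]

lemma vf_spec (k : ℕ) (hk : 1 ≤ k) : ∀ (n : ℕ) (f : Fin n → Bool) (a : Bool) (z : ℕ), z + 1 ≤ k →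
    (vf k n f a z = true ↔
      (Solus f ∧ ¬ HasRun false k f ∧ (a = false → ∀ h : 0 < n, f ⟨0, h⟩ = false)
        ∧ ¬ LeadF (z+1) f)) := by
  intro n
  induction n with
  | zero =>
    intro f a z hz
    simp only [vf]
    constructor
    · intro _
      refine ⟨fun i h => by omega, ?_, fun _ h => by omega, ?_⟩
      · rintro ⟨s, hs, _⟩; omega
      · rintro ⟨h, _⟩; omega
    · intro _; trivial
  | succ n ih =>
    intro g a z hz
    rw [← Fin.cons_self_tail (α := fun _ => Bool) g]
    set f := Fin.tail (α := fun _ => Bool) g with hf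
    rw [vf_cons]
    cases hb : g 0 <;> simp only [hb, if_true, if_false, Bool.false_eq_true, Bool.and_eq_true,
      decide_eq_true_eq]
    · -- b = false : placing a zero
      rw [solus_cons, hasRun_cons hk, leadF_cons]
      constructor
      · rintro ⟨hzpos, hvf⟩
        rw [ih f true (z-1) (by omega)] at hvf
        obtain ⟨h1, h2, _, h4⟩ := hvf
        rw [show z - 1 + 1 = z by omega] at h4
        refine ⟨⟨h1, by simp⟩, ?_, fun _ _ => rfl, ?_⟩
        · rintro (hr | ⟨_, hl⟩)
          · exact h2 hr
          · exact h4 (leadF_mono (by omega) hl)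
        · rintro ⟨_, hl⟩; exact h4 hl
      · rintro ⟨⟨h1, _⟩, h2, _, h4⟩
        rcases Nat.eq_zero_or_pos z with hz0 | hz0
        · exact absurd ⟨rfl, by rw [hz0]; exact leadF_zero f⟩ h4
        refine ⟨hz0, ?_⟩
        rw [ih f true (z-1) (by omega)]
        rw [show z - 1 + 1 = z by omega]
        exact ⟨h1, fun hr => h2 (Or.inl hr), fun hc _ => by simp at hc,
          fun hl => h4 ⟨rfl, hl⟩⟩
    · -- b = true : placing a one
      rw [solus_cons, hasRun_cons hk, leadF_cons]
      constructor
      · rintro ⟨ha, hvf⟩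
        rw [ih f false (k-1) (by omega)] at hvf
        obtain ⟨h1, h2, h3, _⟩ := hvf
        refine ⟨⟨h1, fun _ h => h3 rfl h⟩, ?_, fun hc => by rw [hc] at ha; simp at ha, ?_⟩
        · rintro (hr | ⟨hc, _⟩)
          · exact h2 hr
          · simp at hc
        · rintro ⟨hc, _⟩; simp at hc
      · rintro ⟨⟨h1, hone⟩, h2, h3, _⟩
        refine ⟨?_, ?_⟩
        · cases a with
          | true => rfl
          | false => exact absurd (h3 rfl (by omega)) (by rw [cons_at0 true f rfl]; simp)
        · rw [ih f false (k-1) (by omega)]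
          refine ⟨h1, fun hr => h2 (Or.inl hr), fun _ h => hone rfl h, ?_⟩
          rw [show k - 1 + 1 = k by omega]
          intro hl
          exact h2 (Or.inl (leadF_hasRun hl))

lemma card_vf (k : ℕ) : ∀ (n : ℕ) (a : Bool) (z : ℕ),
    Nat.card {f : Fin n → Bool // vf k n f a z = true} = vcount k n a z := by
  intro n
  induction n with
  | zero =>
    intro a z
    rw [show vcount k 0 a z = 1 from rfl, Nat.card_eq_one_iff_unique]
    exact ⟨⟨fun f g => Subtype.ext (funext fun i => i.elim0)⟩, ⟨⟨fun i => i.elim0, rfl⟩⟩⟩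
  | succ n ih =>
    intro a z
    have e1 : {p : Bool × (Fin n → Bool) // vf k (n+1) (Fin.cons p.1 p.2) a z = true} ≃
        {f : Fin (n+1) → Bool // vf k (n+1) f a z = true} :=
      Equiv.subtypeEquiv (Fin.consEquiv (fun _ => Bool)) (fun p => Iff.rfl)
    have e2 : {p : Bool × (Fin n → Bool) // vf k (n+1) (Fin.cons p.1 p.2) a z = true} ≃
        Σ b : Bool, {f : Fin n → Bool // vf k (n+1) (Fin.cons b f) a z = true} :=
      Equiv.subtypeProdEquivSigmaSubtype (fun (b : Bool) (f : Fin n → Bool) => vf k (n+1) (Fin.cons b f) a z = true)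
    rw [← Nat.card_congr e1, Nat.card_congr e2]
    rw [Nat.card_eq_fintype_card, Fintype.card_sigma, Fintype.sum_bool,
      ← Nat.card_eq_fintype_card, ← Nat.card_eq_fintype_card]
    have htrue : ∀ f : Fin n → Bool, (vf k (n+1) (Fin.cons true f) a z = true) ↔
        (a && vf k n f false (k-1)) = true := by
      intro f; rw [vf_cons]; simp
    have hfalse : ∀ f : Fin n → Bool, (vf k (n+1) (Fin.cons false f) a z = true) ↔
        (decide (0 < z) && vf k n f true (z-1)) = true := by
      intro f; rw [vf_cons]; simp
    rw [Nat.card_congr (Equiv.subtypeEquivRight htrue),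
      Nat.card_congr (Equiv.subtypeEquivRight hfalse)]
    rw [show vcount k (n+1) a z = (if a then vcount k n false (k-1) else 0) +
      (if 0 < z then vcount k n true (z-1) else 0) from rfl]
    congr 1
    · cases a with
      | false =>
        simp only [if_false, Bool.false_and]
        rw [Nat.card_eq_fintype_card]
        simp [Fintype.card_eq_zero_iff, Bool.false_eq_true]
      | true =>
        simp only [if_true, Bool.true_and]
        exact ih false (k-1)
    · by_cases hz : 0 < z
      · simp only [hz, if_true, decide_eq_true_eq]
        rw [← ih true (z-1)]
        apply Nat.card_congr (Equiv.subtypeEquivRight _)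
        intro f; simp [hz]
      · simp only [hz, if_false]
        rw [Nat.card_eq_fintype_card]
        simp only [Fintype.card_eq_zero_iff]
        constructor
        rintro ⟨f, hf⟩
        simp [hz] at hf

/-- Number of solus bitstrings of length `n` with no run of `k` consecutive 0s. -/
noncomputable def solusNoZeroRunCount (k n : ℕ) : ℕ :=
  Nat.card {f : Fin n → Bool // Solus f ∧ ¬ HasRun false k f}

lemma count_eq (k : ℕ) (hk : 1 ≤ k) (n : ℕ) :
    solusNoZeroRunCount k n = vcount k n true (k-1) := by
  rw [← card_vf k n true (k-1)]
  unfold solusNoZeroRunCount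
  apply Nat.card_congr (Equiv.subtypeEquivRight _).symm
  intro f
  rw [vf_spec k hk n f true (k-1) (by omega), show k - 1 + 1 = k by omega]
  constructor
  · rintro ⟨h1, h2, _, _⟩; exact ⟨h1, h2⟩
  · rintro ⟨h1, h2⟩
    exact ⟨h1, h2, fun hc => by simp at hc, fun hl => h2 (leadF_hasRun hl)⟩

open PowerSeries in
lemma mk_shift (f : ℕ → ℤ) :
    PowerSeries.mk f = C (f 0) + X * PowerSeries.mk (fun n => f (n+1)) := by
  ext n
  cases n with
  | zero => simp [coeff_mk]
  | succ n => rw [map_add, coeff_succ_X_mul, coeff_mk, coeff_mk, coeff_C]; simp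

open PowerSeries Finset in
lemma cz_formula (k : ℕ) :
    let B : ℤ⟦X⟧ := PowerSeries.mk (fun n => (vcount k n false (k-1) : ℤ))
    ∀ z : ℕ, PowerSeries.mk (fun n => (vcount k n true z : ℤ)) =
      (1 + X * B) * ∑ i ∈ range (z+1), (X:ℤ⟦X⟧)^i := by
  intro B z
  induction z with
  | zero =>
    rw [mk_shift]
    have : (fun n => (vcount k (n+1) true 0 : ℤ)) = fun n => (vcount k n false (k-1) : ℤ) := by
      funext n
      show ((if true then vcount k n false (k-1) else 0) + (if 0 < 0 then vcount k n true (0-1) else 0) : ℤ) = _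
      simp
    rw [this, show vcount k 0 true 0 = 1 from rfl]
    push_cast
    simp only [geom_sum_one]
    rw [map_one]
    ring
  | succ z ih =>
    rw [mk_shift]
    have : (fun n => (vcount k (n+1) true (z+1) : ℤ)) =
        fun n => (vcount k n false (k-1) : ℤ) + (vcount k n true z : ℤ) := by
      funext n
      show ((if true then vcount k n false (k-1) else 0) + (if 0 < z+1 then vcount k n true (z+1-1) else 0) : ℤ) = _
      simp
    rw [this]
    have hadd : PowerSeries.mk (fun n => ((vcount k n false (k-1) : ℤ) + (vcount k n true z : ℤ))) =
        PowerSeries.mk (fun n => (vcount k n false (k-1) : ℤ)) + PowerSeries.mk (fun n => (vcount k n true z : ℤ)) := by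
      ext m; simp [coeff_mk]
    rw [hadd, ih]
    rw [geom_sum_succ (x := (X:ℤ⟦X⟧)) (n := z+1)]
    show (C (1:ℤ)) + X * (B + (1 + X * B) * ∑ i ∈ range (z+1), (X:ℤ⟦X⟧)^i) = _
    rw [map_one]
    ring

open PowerSeries Finset in
theorem solusNoZeroRunCount_gf (k : ℕ) (hk : 1 ≤ k) :
    (PowerSeries.mk (fun n => (solusNoZeroRunCount k n : ℤ))) *
        (1 - (X : ℤ⟦X⟧) - X ^ 2 + X ^ (k + 1)) =
      1 + (X : ℤ⟦X⟧) - X ^ k - X ^ (k + 1) := by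
  obtain ⟨m, rfl⟩ : ∃ m, k = m + 1 := ⟨k - 1, by omega⟩
  set S : ℤ⟦X⟧ := ∑ i ∈ range m, (X:ℤ⟦X⟧) ^ i with hS
  set B : ℤ⟦X⟧ := PowerSeries.mk (fun n => (vcount (m+1) n false (m+1-1) : ℤ)) with hB
  have hCz := cz_formula (m+1)
  simp only [] at hCz
  rw [← hB] at hCz
  have eqB : B * (1 - X^2 * S) = 1 + X * S := by
    cases m with
    | zero =>
      have hB1 : B = 1 := by
        rw [hB, mk_shift]
        have : (fun n => (vcount 1 (n+1) false (1-1) : ℤ)) = fun _ => 0 := by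
          funext n
          show ((if false then vcount 1 n false (1-1) else 0) + (if 0 < (0:ℕ) then vcount 1 n true 0 else 0) : ℤ) = 0
          simp
        rw [this, show vcount 1 0 false 0 = 1 from rfl]
        have : PowerSeries.mk (fun _ => (0:ℤ)) = 0 := by ext; simp [coeff_mk]
        rw [this]
        simp
      rw [hB1, hS]
      simp [geom_sum_zero]
    | succ m' =>
      have h1 : (fun n => (vcount (m'+1+1) (n+1) false (m'+1+1-1) : ℤ)) =
          fun n => (vcount (m'+1+1) n true m' : ℤ) := by
        funext n
        show ((if false then vcount (m'+1+1) n false (m'+1+1-1) else 0)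
          + (if 0 < m'+1 then vcount (m'+1+1) n true (m'+1-1) else 0) : ℤ) = _
        simp
      have hB2 : B = 1 + X * ((1 + X * B) * S) := by
        conv_lhs => rw [hB, mk_shift, h1, hCz m',
          show vcount (m'+1+1) 0 false (m'+1+1-1) = 1 from rfl]
        rw [Nat.cast_one, map_one, ← hS]
      linear_combination hB2
  have hP : (1 - (X:ℤ⟦X⟧)) * S = 1 - X ^ m := by
    have := geom_sum_mul (X:ℤ⟦X⟧) m
    rw [hS]
    linear_combination -this
  have hH : PowerSeries.mk (fun n => (solusNoZeroRunCount (m+1) n : ℤ)) =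
      (1 + X * B) * (X * S + 1) := by
    have h1 : (fun n => (solusNoZeroRunCount (m+1) n : ℤ)) =
        fun n => (vcount (m+1) n true (m+1-1) : ℤ) := by
      funext n
      rw [count_eq (m+1) (by omega) n]
    rw [h1, hCz (m+1-1), show m+1-1 = m from rfl, geom_sum_succ, hS]
  rw [hH]
  rw [pow_succ ((X:ℤ⟦X⟧)) (m+1), pow_succ ((X:ℤ⟦X⟧)) m]
  linear_combination (X*(1-X)*(1+X*S)) * eqB + ((1+X*B)*(1+X*S)*X^2 + X + X^2) * hP
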